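/- Let val be a C-valuation with a strongly neutral color ε, and let G = (V,E) be a C-graph. Define the C-game 𝒢' = (G', V'_Eve, val) with G' = (V', E'), V' = V ∪ 𝒫⁺(V) (where 𝒫⁺(V) is the set of nonempty subsets of V), V'_Eve = 𝒫⁺(V), and E' = E ∪ { v →ε A : v ∈ V, A ∈ 𝒫⁺(V), v ∈ A } ∪ { A →ε v : A ∈ 𝒫⁺(V), v ∈ A }. Then for every v₀ ∈ V, val_{𝒢'}(v₀) = val_G(v₀). -/
import Mathlib


/-!
Common vocabulary: graphs as edge relations `E : V → C → V → Prop` (a `C`-graph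
additionally has no sinks), infinite paths and their colorations, valuations,
values of vertices, morphisms, universality, monotonic graphs, games,
strategies, positional strategies and positionality, neutral colors.
-/

universe u v w

section Prelim

variable {C : Type} {X : Type}

/-- A `C`-graph (as an edge relation) has no sinks. -/
def NoSinks {V : Type v} (E : V → C → V → Prop) : Prop :=
  ∀ a : V, ∃ (c : C) (b : V), E a c b

/-- `InfPath E a w` : there is an infinite path from `a` with coloration `w`. -/
def InfPath {V : Type v} (E : V → C → V → Prop) (a : V) (w : ℕ → C) : Prop :=
  ∃ ρ : ℕ → V, ρ 0 = a ∧ ∀ i, E (ρ i) (w i) (ρ (i + 1))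

/-- The value of a vertex in a graph: supremum of values of colorations of
infinite paths from it. -/
noncomputable def vval {V : Type v} [CompleteLinearOrder X]
    (val : (ℕ → C) → X) (E : V → C → V → Prop) (a : V) : X :=
  sSup (val '' {w | InfPath E a w})

/-- Morphisms of `C`-graphs. -/
def IsMorphism {V : Type v} {V' : Type w} (E : V → C → V → Prop)
    (E' : V' → C → V' → Prop) (φ : V → V') : Prop :=
  ∀ ⦃a : V⦄ ⦃c : C⦄ ⦃b : V⦄, E a c b → E' (φ a) c (φ b)

/-- `val`-preserving morphisms of `C`-graphs. -/
def ValPreserving {V : Type v} {V' : Type w} [CompleteLinearOrder X]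
    (val : (ℕ → C) → X) (E : V → C → V → Prop) (E' : V' → C → V' → Prop)
    (φ : V → V') : Prop :=
  IsMorphism E E' φ ∧ ∀ a : V, vval val E' (φ a) = vval val E a

/-- Left composition: `a ≥ b → (b →c d) → (a →c d)`. -/
def LeftComp {L : Type v} [LinearOrder L] (M : L → C → L → Prop) : Prop :=
  ∀ ⦃a b : L⦄ ⦃c : C⦄ ⦃d : L⦄, b ≤ a → M b c d → M a c d

/-- Right composition: `(a →c b) → b ≥ d → (a →c d)`. -/
def RightComp {L : Type v} [LinearOrder L] (M : L → C → L → Prop) : Prop :=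
  ∀ ⦃a : L⦄ ⦃c : C⦄ ⦃b d : L⦄, M a c b → d ≤ b → M a c d

/-- A monotonic graph over a linearly ordered vertex set. -/
def Monotonic {L : Type v} [LinearOrder L] (M : L → C → L → Prop) : Prop :=
  LeftComp M ∧ RightComp M

/-- Every vertex has a `c`-predecessor, for every color `c`. -/
def CompletePreds {L : Type v} (M : L → C → L → Prop) : Prop :=
  ∀ (c : C) (l : L), ∃ p : L, M p c l

/-- `CWM C L M` : `M` is a completely well-monotonic `C`-graph over `L`:
monotonic, without sinks, well-ordered, a complete lattice, and with all
`c`-predecessors. -/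
def CWM (C : Type) (L : Type v) [LinearOrder L] (M : L → C → L → Prop) : Prop :=
  Monotonic M ∧ NoSinks M ∧ WellFounded ((· < ·) : L → L → Prop) ∧
    (∀ A : Set L, ∃ a : L, IsLUB A a) ∧ CompletePreds M

/-- `(κ, val)`-universality: every `C`-graph with fewer than `κ` vertices has a
`val`-preserving morphism into `M`. -/
def Universal {L : Type v} [CompleteLinearOrder X] (val : (ℕ → C) → X)
    (κ : Cardinal.{u}) (M : L → C → L → Prop) : Prop :=
  ∀ (V : Type u) (E : V → C → V → Prop), NoSinks E → Cardinal.mk V < κ →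
    ∃ φ : V → L, ValPreserving val E M φ

/-! Histories: finite paths from `v₀`, stored as lists of steps `(c, x)`,
most recent step first. -/

/-- Last vertex of a history. -/
def lastV {V : Type v} (v₀ : V) : List (C × V) → V
  | [] => v₀
  | (_, x) :: _ => x

/-- Validity of a history with respect to the graph `E` and start vertex `v₀`. -/
def ValidPath {V : Type v} (E : V → C → V → Prop) (v₀ : V) : List (C × V) → Prop
  | [] => True
  | (c, x) :: rest => ValidPath E v₀ rest ∧ E (lastV v₀ rest) c x

/-- A strategy (for Eve) from `v₀` in the game `(E, VEve, val)` : a subgraph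
`(H, F)` of the unfolding of `E` from `v₀`, containing the empty history,
without sinks, and closed under all extensions at Adam vertices. -/
structure Strategy {V : Type v} (E : V → C → V → Prop) (VEve : Set V) (v₀ : V) where
  H : Set (List (C × V))
  F : List (C × V) → C → List (C × V) → Prop
  valid : ∀ π ∈ H, ValidPath E v₀ π
  nil_mem : [] ∈ H
  F_sub : ∀ ⦃π : List (C × V)⦄ ⦃c : C⦄ ⦃π' : List (C × V)⦄,
    F π c π' → π ∈ H ∧ π' ∈ H ∧ ∃ x : V, π' = (c, x) :: π
  no_sink : ∀ π ∈ H, ∃ (c : C) (π' : List (C × V)), F π c π'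
  adam_closed : ∀ π ∈ H, lastV v₀ π ∉ VEve →
    ∀ (c : C) (x : V), E (lastV v₀ π) c x → ((c, x) :: π) ∈ H ∧ F π c ((c, x) :: π)

/-- The value of a strategy: supremum of values of colorations of infinite
paths from the empty history in the strategy. -/
noncomputable def Strategy.value {V : Type v} [CompleteLinearOrder X]
    (val : (ℕ → C) → X) {E : V → C → V → Prop} {VEve : Set V} {v₀ : V}
    (S : Strategy E VEve v₀) : X :=
  sSup (val '' {w | ∃ ρ : ℕ → List (C × V), ρ 0 = [] ∧ ∀ i, S.F (ρ i) (w i) (ρ (i + 1))})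

/-- The value of a vertex in a game: infimum of values of strategies from it. -/
noncomputable def gameValue {V : Type v} [CompleteLinearOrder X] (val : (ℕ → C) → X)
    (E : V → C → V → Prop) (VEve : Set V) (v₀ : V) : X :=
  ⨅ S : Strategy E VEve v₀, S.value val

/-- A positional strategy: a subgraph of `E` over all vertices keeping all
outgoing edges of Adam vertices. -/
structure PosStrategy {V : Type v} (E : V → C → V → Prop) (VEve : Set V) where
  F : V → C → V → Prop
  sub : ∀ ⦃a : V⦄ ⦃c : C⦄ ⦃b : V⦄, F a c b → E a c b
  no_sink : NoSinks F
  adam_all : ∀ a : V, a ∉ VEve → ∀ (c : C) (b : V), E a c b → F a c b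

/-- The value of a positional strategy from a vertex. -/
noncomputable def PosStrategy.value {V : Type v} [CompleteLinearOrder X]
    (val : (ℕ → C) → X) {E : V → C → V → Prop} {VEve : Set V}
    (P : PosStrategy E VEve) (v₀ : V) : X :=
  vval val P.F v₀

/-- Optimality of a positional strategy. -/
def PosStrategy.Optimal {V : Type v} [CompleteLinearOrder X]
    (val : (ℕ → C) → X) {E : V → C → V → Prop} {VEve : Set V}
    (P : PosStrategy E VEve) : Prop :=
  ∀ v₀ : V, P.value val v₀ = gameValue val E VEve v₀

/-- A valuation is positional if every game with this valuation admits an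
optimal positional strategy. -/
def Positional [CompleteLinearOrder X] (val : (ℕ → C) → X) : Prop :=
  ∀ (V : Type u) (E : V → C → V → Prop), NoSinks E → ∀ VEve : Set V,
    ∃ P : PosStrategy E VEve, P.Optimal val

/-! Words and neutral colors. -/

/-- Concatenation of a finite word with an infinite word. -/
def wcat (u : List C) (w : ℕ → C) : ℕ → C := fun i =>
  if h : i < u.length then u.get ⟨i, h⟩ else w (i - u.length)

/-- `w'` is obtained from `w` by inserting finitely many `e`'s between
consecutive letters (and before the first letter):
`w' = e^{n₀} w₀ e^{n₁} w₁ ⋯`. -/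
def IsEpsInsertion (e : C) (w w' : ℕ → C) : Prop :=
  ∃ σ : ℕ → ℕ, StrictMono σ ∧ (∀ k, w' (σ k) = w k) ∧ ∀ i, i ∉ Set.range σ → w' i = e

/-- `e` is a neutral color for `val`. -/
def Neutral [CompleteLinearOrder X] (val : (ℕ → C) → X) (e : C) : Prop :=
  ∀ w w' : ℕ → C, IsEpsInsertion e w w' → val w' = val w

/-- `e` is eventually good for Eve. -/
def EvGoodForEve [CompleteLinearOrder X] (val : (ℕ → C) → X) (e : C) : Prop :=
  ∀ u : List C, val (wcat u fun _ => e) = ⨅ z : ℕ → C, val (wcat u z)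

/-- `e` is strongly neutral for `val`. -/
def StronglyNeutral [CompleteLinearOrder X] (val : (ℕ → C) → X) (e : C) : Prop :=
  Neutral val e ∧ EvGoodForEve val e

/-- Prefix-increasing valuations. -/
def PrefixIncreasing [CompleteLinearOrder X] (val : (ℕ → C) → X) : Prop :=
  ∀ (u : List C) (w : ℕ → C), val w ≤ val (wcat u w)

/-! Objectives. -/

/-- The valuation (into the two-element complete linear order `Prop`,
`⊥ = False`, `⊤ = True`) associated with an objective `W`: winning words have
value `⊥`. -/
def toVal (W : Set (ℕ → C)) : (ℕ → C) → Prop := fun w => w ∉ W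

/-- A vertex satisfies the objective `W` if every coloration of an infinite
path from it belongs to `W`. -/
def Sat {V : Type v} (W : Set (ℕ → C)) (E : V → C → V → Prop) (a : V) : Prop :=
  ∀ w : ℕ → C, InfPath E a w → w ∈ W

/-- Prefix-invariant objectives. -/
def PrefixInvariant (W : Set (ℕ → C)) : Prop :=
  ∀ (u : List C) (w : ℕ → C), wcat u w ∈ W ↔ w ∈ W

/-- The completion `L^⊤` of a monotonic graph: a new top vertex with all
outgoing edges is added. -/
def completionE {L : Type v} (M : L → C → L → Prop) :
    WithTop L → C → WithTop L → Prop := fun x c y =>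
  x = ⊤ ∨ ∃ a b : L, x = (a : WithTop L) ∧ y = (b : WithTop L) ∧ M a c b

/-- A graph has sufficiently many `e`-edges if `→e` is "well-founded" in the
sense that every nonempty set of vertices contains a vertex `a` with `b →e a`
for all `b` in the set. -/
def SuffEps {V : Type v} (E : V → C → V → Prop) (e : C) : Prop :=
  ∀ A : Set V, A.Nonempty → ∃ a ∈ A, ∀ b ∈ A, E b e a

end Prelim
/-- The game `𝒢'` built from a graph `G = (V, E)` and a (strongly neutral)
color `e`: vertices are `V ⊕ 𝒫⁺(V)`, Eve controls the nonempty subsets,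
edges are those of `E` together with `v →e A` and `A →e v` for `v ∈ A`. -/
def gameE {C : Type} {V : Type u} (E : V → C → V → Prop) (e : C) :
    V ⊕ {A : Set V // A.Nonempty} → C → V ⊕ {A : Set V // A.Nonempty} → Prop :=
  fun x c y =>
    match x, y with
    | Sum.inl a, Sum.inl b => E a c b
    | Sum.inl a, Sum.inr A => c = e ∧ a ∈ A.val
    | Sum.inr A, Sum.inl b => c = e ∧ b ∈ A.val
    | Sum.inr _, Sum.inr _ => False
section Aux
variable {C : Type} {V : Type u}

lemma wcat_nil (z : ℕ → C) : wcat ([] : List C) z = z := by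
  funext i; simp [wcat]

lemma wcat_zero_cons (c : C) (u : List C) (z : ℕ → C) : wcat (c :: u) z 0 = c := by
  simp [wcat]

lemma wcat_succ_cons (c : C) (u : List C) (z : ℕ → C) (i : ℕ) :
    wcat (c :: u) z (i + 1) = wcat u z i := by
  unfold wcat
  by_cases h : i < u.length
  · rw [dif_pos (by simpa using Nat.succ_lt_succ h), dif_pos h]
    rfl
  · rw [dif_neg (by simp only [List.length_cons]; omega), dif_neg h]
    simp [Nat.succ_sub_succ]

/-- Finite paths with a given coloration. -/
inductive FinPath (E : V → C → V → Prop) : V → List C → V → Prop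
  | nil (a : V) : FinPath E a [] a
  | cons {a : V} {c : C} {b : V} {u : List C} {d : V} (h : E a c b) (h' : FinPath E b u d) :
      FinPath E a (c :: u) d

lemma FinPath.concat {E : V → C → V → Prop} :
    ∀ {a u b}, FinPath E a u b → ∀ {c d}, E b c d → FinPath E a (u ++ [c]) d := by
  intro a u b h
  induction h with
  | nil a => intro c d h'; exact .cons h' (.nil _)
  | cons h1 _ ih => intro c d h'; exact .cons h1 (ih h')

lemma exists_infPath {E : V → C → V → Prop} (hE : NoSinks E) (a : V) :
    ∃ z : ℕ → C, InfPath E a z := by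
  classical
  choose c b h using hE
  refine ⟨fun i => c (b^[i] a), (fun i => b^[i] a), rfl, fun i => ?_⟩
  show E (b^[i] a) (c (b^[i] a)) (b^[i+1] a)
  rw [Function.iterate_succ_apply']
  exact h _

lemma FinPath.toInf {E : V → C → V → Prop} :
    ∀ {a u b}, FinPath E a u b → ∀ z, InfPath E b z → InfPath E a (wcat u z) := by
  intro a u b h
  induction h with
  | nil a => intro z hz; rw [wcat_nil]; exact hz
  | @cons a c b u d h1 _ ih =>
      intro z hz
      obtain ⟨ρ, h0, hρ⟩ := ih z hz
      refine ⟨fun i => Nat.rec a (fun i _ => ρ i) i, rfl, fun i => ?_⟩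
      cases i with
      | zero =>
          show E a (wcat (c :: u) z 0) (ρ 0)
          rw [wcat_zero_cons, h0]; exact h1
      | succ i =>
          show E (ρ i) (wcat (c :: u) z (i + 1)) (ρ (i + 1))
          rw [wcat_succ_cons]; exact hρ i

end Aux
section Game
variable {C : Type} {V : Type u}

/-- The plays consistent with Eve's "return immediately" strategy. -/
inductive Play (E : V → C → V → Prop) (e : C) (v₀ : V) :
    List (C × (V ⊕ {A : Set V // A.Nonempty})) → Prop
  | nil : Play E e v₀ []
  | step {π} (h : Play E e v₀ π) {v c y} (hv : lastV (Sum.inl v₀) π = Sum.inl v)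
      (he : gameE E e (Sum.inl v) c y) : Play E e v₀ ((c, y) :: π)
  | back {π c A} (h : Play E e v₀ ((c, Sum.inr A) :: π)) :
      Play E e v₀ ((e, lastV (Sum.inl v₀) π) :: (c, Sum.inr A) :: π)

lemma Play.tail {E : V → C → V → Prop} {e v₀ c x π}
    (h : Play E e v₀ ((c, x) :: π)) : Play E e v₀ π := by
  cases h with
  | step h _ _ => exact h
  | back h => exact h

lemma Play.inr_inv {E : V → C → V → Prop} {e v₀ π} (h : Play E e v₀ π) :
    ∀ {c A π'}, π = (c, Sum.inr A) :: π' →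
      ∃ v, lastV (Sum.inl v₀) π' = Sum.inl v ∧ c = e ∧ v ∈ A.val := by
  induction h with
  | nil => intro c A π' h; exact absurd h (by simp)
  | @step π h v c y hv he ih =>
      intro c' A π' heq
      injection heq with h1 h2
      injection h1 with hc hy
      subst hc; subst hy; subst h2
      exact ⟨v, hv, he⟩
  | @back π c A h ih =>
      intro c' A' π' heq
      injection heq with h1 h2
      injection h1 with hc hy
      obtain ⟨v, hv, -, -⟩ := ih rfl
      rw [hv] at hy
      exact absurd hy (by simp)

lemma Play.back_inv {E : V → C → V → Prop} {e v₀ π} (h : Play E e v₀ π) :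
    ∀ {c' x c A π'}, π = (c', x) :: (c, Sum.inr A) :: π' →
      c' = e ∧ x = lastV (Sum.inl v₀) π' := by
  induction h with
  | nil => intro c' x c A π' h; exact absurd h (by simp)
  | @step π h v c y hv he ih =>
      intro c' x c'' A π' heq
      injection heq with h1 h2
      subst h2
      exact absurd hv (by simp [lastV])
  | @back π c A h ih =>
      intro c' x c'' A' π' heq
      injection heq with h1 h2
      injection h2 with h3 h4
      injection h1 with he hx
      exact ⟨he.symm, by rw [← hx, h4]⟩

lemma Play.valid {E : V → C → V → Prop} {e v₀ π} (h : Play E e v₀ π) :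
    ValidPath (gameE E e) (Sum.inl v₀) π := by
  induction h with
  | nil => trivial
  | @step π h v c y hv he ih =>
      exact ⟨ih, by rw [hv]; exact he⟩
  | @back π c A h ih =>
      obtain ⟨v, hv, -, hvA⟩ := h.inr_inv rfl
      refine ⟨ih, ?_⟩
      show gameE E e (Sum.inr A) e (lastV (Sum.inl v₀) π)
      rw [hv]
      exact ⟨rfl, hvA⟩

/-- Eve's strategy: at a set-vertex, return to the vertex just visited. -/
def evStrat (E : V → C → V → Prop) (hE : NoSinks E) (e : C) (v₀ : V) :
    Strategy (gameE E e) (Set.range Sum.inr) (Sum.inl v₀) where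
  H := {π | Play E e v₀ π}
  F := fun π c π' => Play E e v₀ π ∧ Play E e v₀ π' ∧ ∃ x, π' = (c, x) :: π
  valid := fun _ h => h.valid
  nil_mem := Play.nil
  F_sub := fun _ _ _ h => h
  no_sink := by
    intro π hπ
    match hlast : lastV (Sum.inl v₀) π with
    | Sum.inl v =>
        obtain ⟨c, b, hcb⟩ := hE v
        exact ⟨c, _, hπ, Play.step hπ hlast (show gameE E e (Sum.inl v) c (Sum.inl b) from hcb),
          _, rfl⟩
    | Sum.inr A =>
        match π, hlast with
        | [], hlast => exact absurd hlast (by simp [lastV])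
        | (c, Sum.inl v) :: π', hlast => exact absurd hlast (by simp [lastV])
        | (c, Sum.inr A') :: π', hlast =>
            exact ⟨e, _, hπ, Play.back hπ, _, rfl⟩
  adam_closed := by
    intro π hπ hAdam c x hx
    match hlast : lastV (Sum.inl v₀) π with
    | Sum.inl v =>
        have hp : Play E e v₀ ((c, x) :: π) := Play.step hπ hlast (by rw [← hlast]; exact hx)
        exact ⟨hp, hπ, hp, x, rfl⟩
    | Sum.inr A => exact absurd ⟨A, hlast.symm⟩ hAdam

end Game
section Easy
variable {C X : Type} {V : Type u} [CompleteLinearOrder X]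

lemma vval_le_gameValue (val : (ℕ → C) → X) (e : C) (E : V → C → V → Prop) (v₀ : V) :
    vval val E v₀ ≤ gameValue val (gameE E e) (Set.range Sum.inr) (Sum.inl v₀) := by
  refine le_iInf fun S => sSup_le ?_
  rintro x ⟨w, hw, rfl⟩
  obtain ⟨rr, h0, hρ⟩ := hw
  set g : ℕ → List (C × (V ⊕ {A : Set V // A.Nonempty})) :=
    fun i => Nat.rec [] (fun i πi => (w i, Sum.inl (rr (i + 1))) :: πi) i with hg
  have key : ∀ i, g i ∈ S.H ∧ lastV (Sum.inl v₀) (g i) = Sum.inl (rr i) := by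
    intro i
    induction i with
    | zero => exact ⟨S.nil_mem, by rw [h0]; rfl⟩
    | succ i ih =>
        have hna : lastV (Sum.inl v₀) (g i) ∉ Set.range Sum.inr := by
          rw [ih.2]; rintro ⟨A, hA⟩; exact absurd hA (by simp)
        have := S.adam_closed _ ih.1 hna (w i) (Sum.inl (rr (i + 1)))
          (by rw [ih.2]; exact hρ i)
        exact ⟨this.1, rfl⟩
  have hF : ∀ i, S.F (g i) (w i) (g (i + 1)) := by
    intro i
    have hna : lastV (Sum.inl v₀) (g i) ∉ Set.range Sum.inr := by
      rw [(key i).2]; rintro ⟨A, hA⟩; exact absurd hA (by simp)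
    exact (S.adam_closed _ (key i).1 hna (w i) (Sum.inl (rr (i + 1)))
      (by rw [(key i).2]; exact hρ i)).2
  exact le_sSup ⟨w, ⟨g, rfl, hF⟩, rfl⟩

end Easy
section Main
variable {C : Type} {V : Type u}

/-- The positions where an `E`-step is taken. -/
def EStep (τ : ℕ → V ⊕ {A : Set V // A.Nonempty}) (i : ℕ) : Prop :=
  ∃ a b : V, τ i = Sum.inl a ∧ τ (i + 1) = Sum.inl b

lemma main_extract {X : Type} [CompleteLinearOrder X]
    (val : (ℕ → C) → X) {e : C} (hsn : StronglyNeutral val e)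
    {E : V → C → V → Prop} (hE : NoSinks E) (v₀ : V)
    (τ : ℕ → V ⊕ {A : Set V // A.Nonempty}) (w : ℕ → C)
    (hτ0 : τ 0 = Sum.inl v₀)
    (hF1 : ∀ i, gameE E e (τ i) (w i) (τ (i + 1)))
    (hF2 : ∀ i A, τ (i + 1) = Sum.inr A → τ (i + 2) = τ i ∧ w (i + 1) = e) :
    val w ≤ vval val E v₀ := by
  classical
  set S : ℕ → Prop := EStep τ with hSdef
  have G1 : ∀ i, ¬ S i → w i = e := by
    intro i hS
    have h1 := hF1 i
    match h2 : τ i, h3 : τ (i + 1) with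
    | Sum.inl a, Sum.inl b => exact absurd ⟨a, b, h2, h3⟩ hS
    | Sum.inl a, Sum.inr A => rw [h2, h3] at h1; exact h1.1
    | Sum.inr A, Sum.inl b => rw [h2, h3] at h1; exact h1.1
    | Sum.inr A, Sum.inr B => rw [h2, h3] at h1; exact h1.elim
  have L5 : ∀ n i a b, τ i = Sum.inl a → τ (i + n) = Sum.inl b →
      (∀ j, i ≤ j → j < i + n → ¬ S j) → b = a := by
    intro n
    induction n using Nat.strong_induction_on with
    | _ n ih =>
      match n, ih with
      | 0, _ =>
          intro i a b h1 h2 _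
          have := h1.symm.trans h2
          injection this with h
          exact h.symm
      | 1, _ =>
          intro i a b h1 h2 hno
          exact absurd ⟨a, b, h1, h2⟩ (hno i le_rfl (by omega))
      | (m + 2), ih =>
          intro i a b h1 h2 hno
          have hSi := hno i le_rfl (by omega)
          obtain ⟨A, hA⟩ : ∃ A, τ (i + 1) = Sum.inr A := by
            match h : τ (i + 1) with
            | Sum.inl b' => exact absurd ⟨a, b', h1, h⟩ hSi
            | Sum.inr A => exact ⟨A, rfl⟩
          obtain ⟨h3, -⟩ := hF2 i A hA
          refine ih m (by omega) (i + 2) a b (by rw [h3, h1]) ?_ ?_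
          · rw [show i + 2 + m = i + (m + 2) from by omega]; exact h2
          · intro j hj1 hj2; exact hno j (by omega) (by omega)
  by_cases hinf : (setOf S).Infinite
  · -- infinitely many E-steps
    have hmono : StrictMono (Nat.nth S) := Nat.nth_strictMono hinf
    have hmem : ∀ k, ∃ a b, τ (Nat.nth S k) = Sum.inl a ∧
        τ (Nat.nth S k + 1) = Sum.inl b := fun k => Nat.nth_mem_of_infinite hinf k
    choose aa bb haa hbb using hmem
    have hgap : ∀ j, S j → ∃ k, Nat.nth S k = j := fun j hj =>
      let ⟨n, _, hn⟩ := Nat.exists_lt_card_nth_eq hj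
      ⟨n, hn⟩
    have hgapk : ∀ k j, Nat.nth S k < j → j < Nat.nth S (k + 1) → ¬ S j := by
      intro k j h1 h2 hS
      obtain ⟨l, rfl⟩ := hgap j hS
      rw [Nat.nth_lt_nth hinf] at h1 h2
      omega
    have hgap0 : ∀ j, j < Nat.nth S 0 → ¬ S j := by
      intro j h1 hS
      obtain ⟨l, rfl⟩ := hgap j hS
      rw [Nat.nth_lt_nth hinf] at h1
      omega
    have link : ∀ k, bb k = aa (k + 1) := by
      intro k
      have h1 : Nat.nth S k + 1 ≤ Nat.nth S (k + 1) := hmono (Nat.lt_succ_self k)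
      have := L5 (Nat.nth S (k + 1) - (Nat.nth S k + 1)) (Nat.nth S k + 1) (bb k)
        (aa (k + 1)) (hbb k)
        (by rw [show Nat.nth S k + 1 + (Nat.nth S (k + 1) - (Nat.nth S k + 1)) =
            Nat.nth S (k + 1) from by omega]; exact haa (k + 1))
        (fun j hj1 hj2 => hgapk k j (by omega) (by omega))
      exact this.symm
    have h00 : aa 0 = v₀ :=
      L5 (Nat.nth S 0) 0 v₀ (aa 0) hτ0 (by rw [Nat.zero_add]; exact haa 0)
        (fun j hj1 hj2 => hgap0 j (by omega))
    have hpath : InfPath E v₀ (fun k => w (Nat.nth S k)) := by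
      refine ⟨aa, h00, fun k => ?_⟩
      have h1 := hF1 (Nat.nth S k)
      rw [haa k, hbb k] at h1
      rw [← link k]
      exact h1
    have hins : IsEpsInsertion e (fun k => w (Nat.nth S k)) w := by
      refine ⟨Nat.nth S, hmono, fun k => rfl, fun i hi => ?_⟩
      refine G1 i fun hS => ?_
      obtain ⟨l, hl⟩ := hgap i hS
      exact hi ⟨l, hl⟩
    rw [hsn.1 _ w hins]
    exact le_sSup ⟨_, hpath, rfl⟩
  · -- finitely many E-steps
    rw [Set.not_infinite] at hinf
    obtain ⟨N, hN⟩ : ∃ N, ∀ i, S i → i < N := by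
      obtain ⟨M, hM⟩ := hinf.bddAbove
      exact ⟨M + 1, fun i hi => Nat.lt_succ_of_le (hM hi)⟩
    set m := hinf.toFinset.card with hmdef
    have hmem' : ∀ k, k < m → ∃ a b, τ (Nat.nth S k) = Sum.inl a ∧
        τ (Nat.nth S k + 1) = Sum.inl b :=
      fun k hk => Nat.nth_mem_of_lt_card hinf hk
    have hgap : ∀ j, S j → ∃ k, k < m ∧ Nat.nth S k = j := fun j hj =>
      Nat.exists_lt_card_finite_nth_eq hinf hj
    have hlt : ∀ k, k < m → Nat.nth S k < N := by
      intro k hk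
      exact hN _ (Nat.nth_mem_of_lt_card hinf hk)
    set σ : ℕ → ℕ := fun k => if k < m then Nat.nth S k else N + k with hσ
    have hmono : StrictMono σ := by
      intro k l hkl
      show σ k < σ l
      by_cases h1 : k < m <;> by_cases h2 : l < m <;>
        simp only [hσ, if_pos, if_neg, h1, h2, if_true, if_false]
      · exact Nat.nth_lt_nth_of_lt_card hinf hkl h2
      · have := hlt k h1; omega
      · omega
      · omega
    set u : List C := List.ofFn (fun k : Fin m => w (Nat.nth S k)) with hu
    have hlen : u.length = m := by simp [hu]
    have hagree : ∀ k, w (σ k) = wcat u (fun _ => e) k := by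
      intro k
      by_cases hk : k < m
      · simp only [hσ, if_pos hk]
        unfold wcat
        rw [dif_pos (by omega)]
        simp [hu]
      · simp only [hσ, if_neg hk]
        unfold wcat
        rw [dif_neg (by omega)]
        exact G1 (N + k) (fun hS => absurd (hN _ hS) (by omega))
    have hnotS : ∀ i, i ∉ Set.range σ → ¬ S i := by
      intro i hi hS
      obtain ⟨k, hk, hkeq⟩ := hgap i hS
      exact hi ⟨k, by simp only [hσ, if_pos hk]; exact hkeq⟩
    have hins : IsEpsInsertion e (wcat u (fun _ => e)) w :=
      ⟨σ, hmono, hagree, fun i hi => G1 i (hnotS i hi)⟩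
    rw [hsn.1 _ w hins, hsn.2 u]
    have hfin : ∀ k, k ≤ m →
        ∃ a, FinPath E v₀ (List.ofFn (fun j : Fin k => w (Nat.nth S j))) a ∧
          (k < m → τ (Nat.nth S k) = Sum.inl a) := by
      intro k
      induction k with
      | zero =>
          intro _
          refine ⟨v₀, by simpa using FinPath.nil (E := E) v₀, fun hk => ?_⟩
          obtain ⟨a, b, ha, hb⟩ := hmem' 0 hk
          have ha0 : a = v₀ := L5 (Nat.nth S 0) 0 v₀ a hτ0
            (by rw [Nat.zero_add]; exact ha)
            (fun j hj1 hj2 hS => by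
              obtain ⟨l, hl, rfl⟩ := hgap j hS
              have := Nat.nth_le_nth_of_lt_card hinf (Nat.zero_le l) hl
              omega)
          rw [ha, ha0]
      | succ k ih =>
          intro hk1
          have hkm : k < m := by omega
          obtain ⟨a, hpath, hcons⟩ := ih (by omega)
          have hτk := hcons hkm
          obtain ⟨a', b, ha', hb⟩ := hmem' k hkm
          have hedge : E a (w (Nat.nth S k)) b := by
            have h1 := hF1 (Nat.nth S k)
            rw [hτk, hb] at h1
            exact h1
          refine ⟨b, ?_, fun hk2 => ?_⟩
          · have heq : (List.ofFn fun j : Fin (k + 1) => w (Nat.nth S ↑j)) =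
                (List.ofFn fun j : Fin k => w (Nat.nth S ↑j)) ++ [w (Nat.nth S k)] := by
              rw [List.ofFn_succ']
              simp [List.concat_eq_append]
            rw [heq]
            exact hpath.concat hedge
          · have hle : Nat.nth S k + 1 ≤ Nat.nth S (k + 1) :=
              Nat.nth_lt_nth_of_lt_card hinf (Nat.lt_succ_self k) hk2
            obtain ⟨a2, b2, ha2, hb2⟩ := hmem' (k + 1) hk2
            have hab : a2 = b := L5 (Nat.nth S (k + 1) - (Nat.nth S k + 1))
              (Nat.nth S k + 1) b a2 hb
              (by rw [show Nat.nth S k + 1 + (Nat.nth S (k + 1) - (Nat.nth S k + 1)) =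
                  Nat.nth S (k + 1) from by omega]; exact ha2)
              (fun j hj1 hj2 hS => by
                obtain ⟨l, hl, rfl⟩ := hgap j hS
                have h3 : k < l := by
                  rcases Nat.lt_or_ge k l with h | h
                  · exact h
                  · have := Nat.nth_le_nth_of_lt_card hinf h hkm; omega
                have h4 : l < k + 1 := by
                  rcases Nat.lt_or_ge l (k + 1) with h | h
                  · exact h
                  · have := Nat.nth_le_nth_of_lt_card hinf h hl; omega
                omega)
            rw [ha2, hab]
    obtain ⟨a, hpath, -⟩ := hfin m le_rfl
    obtain ⟨z, hz⟩ := exists_infPath hE a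
    refine le_trans (iInf_le _ z) ?_
    refine le_sSup ⟨wcat u z, ?_, rfl⟩
    rw [hu]
    exact hpath.toInf z hz

end Main
section Final
variable {C X : Type} {V : Type u} [CompleteLinearOrder X]

lemma strat_value_le (val : (ℕ → C) → X) {e : C} (hsn : StronglyNeutral val e)
    {E : V → C → V → Prop} (hE : NoSinks E) (v₀ : V) :
    (evStrat E hE e v₀).value val ≤ vval val E v₀ := by
  refine sSup_le ?_
  rintro x ⟨w, ⟨ρ, h0, hF⟩, rfl⟩
  have hx : ∀ i, ∃ y, ρ (i + 1) = (w i, y) :: ρ i := fun i => (hF i).2.2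
  choose xx hxx using hx
  refine main_extract val hsn hE v₀ (fun i => lastV (Sum.inl v₀) (ρ i)) w ?_ ?_ ?_
  · show lastV (Sum.inl v₀) (ρ 0) = Sum.inl v₀
    rw [h0]; rfl
  · intro i
    show gameE E e (lastV (Sum.inl v₀) (ρ i)) (w i) (lastV (Sum.inl v₀) (ρ (i + 1)))
    have hv := ((hF i).2.1).valid
    rw [hxx i] at hv ⊢
    exact hv.2
  · intro i A hA
    replace hA : lastV (Sum.inl v₀) (ρ (i + 1)) = Sum.inr A := hA
    have hxi : xx i = Sum.inr A := by rw [hxx i] at hA; exact hA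
    have hp2 : Play E e v₀ (ρ (i + 1 + 1)) := (hF (i + 1)).2.1
    have heq : ρ (i + 1 + 1) = (w (i + 1), xx (i + 1)) :: (w i, Sum.inr A) :: ρ i := by
      rw [hxx (i + 1), hxx i, hxi]
    obtain ⟨hw, hxx2⟩ := hp2.back_inv heq
    constructor
    · show lastV (Sum.inl v₀) (ρ (i + 1 + 1)) = lastV (Sum.inl v₀) (ρ i)
      rw [hxx (i + 1)]
      exact hxx2
    · exact hw

end Final

/-- Lemma 5.4.  For every `v₀ ∈ V`, the value of `v₀` in
the game `𝒢'` equals its value in the graph `G`. -/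
theorem stmt7 {C X : Type} {V : Type u} [CompleteLinearOrder X]
    (val : (ℕ → C) → X) (e : C) (hsn : StronglyNeutral val e)
    (E : V → C → V → Prop) (hE : NoSinks E) :
    ∀ v₀ : V,
      gameValue val (gameE E e) (Set.range Sum.inr) (Sum.inl v₀) =
        vval val E v₀ := by
  intro v₀
  refine le_antisymm ?_ (vval_le_gameValue val e E v₀)
  exact le_trans (iInf_le _ (evStrat E hE e v₀)) (strat_value_le val hsn hE v₀)
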